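/- Let n ≥ 1 and let A, B ⊆ Fin n be nonempty finite sets. If π is a permutation of Fin n chosen uniformly at random from all n! permutations, then the probability that min_{a ∈ A} π(a) = min_{b ∈ B} π(b) equals the Jaccard coefficient J(A,B) = |A ∩ B| / |A ∪ B|. -/

import Mathlib

open Finset

/-- For a uniformly random permutation `π` of `Fin n` (chosen among all `n!`
permutations), the probability that the minimum of `π` over a nonempty set `A`
equals the minimum of `π` over a nonempty set `B` is the Jaccard coefficient
`|A ∩ B| / |A ∪ B|`. -/
theorem minhash_collision_prob_eq_jaccard {n : ℕ} (hn : 1 ≤ n)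
    (A B : Finset (Fin n)) (hA : A.Nonempty) (hB : B.Nonempty) :
    ((Finset.univ.filter (fun π : Equiv.Perm (Fin n) =>
        (A.image π).min' (hA.image π) = (B.image π).min' (hB.image π))).card : ℚ) /
      (Nat.factorial n : ℚ)
    = ((A ∩ B).card : ℚ) / ((A ∪ B).card : ℚ) := by
  set U := A ∪ B with hUdef
  have hU : U.Nonempty := hA.mono Finset.subset_union_left
  set f : Equiv.Perm (Fin n) → Fin n :=
    fun π => π.symm ((U.image π).min' (hU.image π)) with hf
  have hfval : ∀ π : Equiv.Perm (Fin n),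
      π (f π) = (U.image π).min' (hU.image π) := fun π => π.apply_symm_apply _
  have hfU : ∀ π, f π ∈ U := by
    intro π
    have hm := (U.image π).min'_mem (hU.image π)
    obtain ⟨x, hx, hxe⟩ := Finset.mem_image.1 hm
    have hfx : f π = x := by
      rw [hf]; simp only; rw [← hxe, Equiv.symm_apply_apply]
    rwa [hfx]
  have hsubmin : ∀ (π : Equiv.Perm (Fin n)) (S : Finset (Fin n)) (hS : S.Nonempty),
      S ⊆ U → (U.image π).min' (hU.image π) ≤ (S.image π).min' (hS.image π) := by
    intro π S hS hSU
    exact Finset.min'_le _ _ (Finset.mem_of_subset (Finset.image_subset_image hSU)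
      ((S.image π).min'_mem (hS.image π)))
  have key : ∀ π : Equiv.Perm (Fin n),
      ((A.image π).min' (hA.image π) = (B.image π).min' (hB.image π)) ↔ f π ∈ A ∩ B := by
    intro π
    constructor
    · intro h
      have himg : U.image ⇑π = A.image ⇑π ∪ B.image ⇑π := by
        rw [hUdef, Finset.image_union]
      have hmem0 := (U.image π).min'_mem (hU.image π)
      have hmem : (U.image π).min' (hU.image π) ∈ A.image ⇑π ∪ B.image ⇑π := by
        rw [← himg]; exact hmem0
      rw [Finset.mem_union] at hmem
      have hmA : (U.image π).min' (hU.image π) = (A.image π).min' (hA.image π) := by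
        rcases hmem with hmem | hmem
        · exact le_antisymm (hsubmin π A hA Finset.subset_union_left)
            (Finset.min'_le _ _ hmem)
        · refine le_antisymm (hsubmin π A hA Finset.subset_union_left) ?_
          rw [h]; exact Finset.min'_le _ _ hmem
      have hmB : (U.image π).min' (hU.image π) = (B.image π).min' (hB.image π) := by
        rw [hmA, h]
      rw [Finset.mem_inter]
      constructor
      · have : π (f π) ∈ A.image π := by
          rw [hfval, hmA]; exact (A.image π).min'_mem (hA.image π)
        obtain ⟨a, ha, hae⟩ := Finset.mem_image.1 this
        rwa [← π.injective hae]
      · have : π (f π) ∈ B.image π := by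
          rw [hfval, hmB]; exact (B.image π).min'_mem (hB.image π)
        obtain ⟨b, hb, hbe⟩ := Finset.mem_image.1 this
        rwa [← π.injective hbe]
    · intro h
      rw [Finset.mem_inter] at h
      have hA' : (A.image π).min' (hA.image π) = (U.image π).min' (hU.image π) := by
        refine le_antisymm ?_ (hsubmin π A hA Finset.subset_union_left)
        rw [← hfval]
        exact Finset.min'_le _ _ (Finset.mem_image_of_mem π h.1)
      have hB' : (B.image π).min' (hB.image π) = (U.image π).min' (hU.image π) := by
        refine le_antisymm ?_ (hsubmin π B hB Finset.subset_union_right)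
        rw [← hfval]
        exact Finset.min'_le _ _ (Finset.mem_image_of_mem π h.2)
      rw [hA', hB']
  -- fibers of f over U have equal cardinality
  have hfiber : ∀ x ∈ U, ∀ y ∈ U,
      (Finset.univ.filter (fun π : Equiv.Perm (Fin n) => f π = x)).card
        = (Finset.univ.filter (fun π : Equiv.Perm (Fin n) => f π = y)).card := by
    intro x hx y hy
    set s := Equiv.swap x y with hs
    have hswapU : ∀ a ∈ U, s a ∈ U := by
      intro a ha
      rw [hs, Equiv.swap_apply_def]
      split_ifs <;> assumption
    have himgU : ∀ π : Equiv.Perm (Fin n), U.image (s.trans π) = U.image π := by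
      intro π
      have h1 : U.image s = U := by
        apply Finset.Subset.antisymm
        · intro a ha
          obtain ⟨b, hb, rfl⟩ := Finset.mem_image.1 ha
          exact hswapU b hb
        · intro a ha
          exact Finset.mem_image.2 ⟨s a, hswapU a ha, by rw [hs, Equiv.swap_apply_self]⟩
      calc U.image (s.trans π) = (U.image s).image π := by
            rw [Finset.image_image]; rfl
        _ = U.image π := by rw [h1]
    have hfs : ∀ π : Equiv.Perm (Fin n), f (s.trans π) = s (f π) := by
      intro π
      have hmin : (U.image (s.trans π)).min' (hU.image (s.trans π))
          = (U.image π).min' (hU.image π) := by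
        congr 1
        exact himgU π
      rw [hf]; simp only
      rw [hmin, Equiv.symm_trans_apply, hs, Equiv.symm_swap]
    apply Finset.card_bij' (fun π _ => s.trans π) (fun π _ => s.trans π)
    · intro π hπ
      rw [Finset.mem_filter] at *
      refine ⟨Finset.mem_univ _, ?_⟩
      rw [hfs, hπ.2, hs, Equiv.swap_apply_left]
    · intro π hπ
      rw [Finset.mem_filter] at *
      refine ⟨Finset.mem_univ _, ?_⟩
      rw [hfs, hπ.2, hs, Equiv.swap_apply_right]
    · intro π _
      ext a
      simp [hs, Equiv.swap_apply_self]
    · intro π _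
      ext a
      simp [hs, Equiv.swap_apply_self]
  obtain ⟨x0, hx0⟩ := hU
  set c := (Finset.univ.filter (fun π : Equiv.Perm (Fin n) => f π = x0)).card with hc
  have htot : Nat.factorial n = U.card * c := by
    have h1 : (Finset.univ : Finset (Equiv.Perm (Fin n))).card
        = ∑ x ∈ U, (Finset.univ.filter (fun π => f π = x)).card :=
      Finset.card_eq_sum_card_fiberwise (fun π _ => hfU π)
    have h2 : (Finset.univ : Finset (Equiv.Perm (Fin n))).card = Nat.factorial n := by
      simp [Fintype.card_perm]
    rw [← h2, h1]
    rw [Finset.sum_congr rfl (fun x hx => hfiber x hx x0 hx0), Finset.sum_const, smul_eq_mul]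
  have hnum : (Finset.univ.filter (fun π : Equiv.Perm (Fin n) =>
      (A.image π).min' (hA.image π) = (B.image π).min' (hB.image π))).card
      = (A ∩ B).card * c := by
    have h1 : (Finset.univ.filter (fun π : Equiv.Perm (Fin n) =>
        (A.image π).min' (hA.image π) = (B.image π).min' (hB.image π)))
        = Finset.univ.filter (fun π => f π ∈ A ∩ B) := by
      apply Finset.filter_congr
      intro π _
      exact key π
    rw [h1]
    have h2 : (Finset.univ.filter (fun π : Equiv.Perm (Fin n) => f π ∈ A ∩ B)).card
        = ∑ x ∈ A ∩ B, ((Finset.univ.filter (fun π : Equiv.Perm (Fin n) => f π ∈ A ∩ B)).filter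
            (fun π => f π = x)).card :=
      Finset.card_eq_sum_card_fiberwise (fun π hπ => (Finset.mem_filter.1 hπ).2)
    rw [h2]
    have h3 : ∀ x ∈ A ∩ B,
        ((Finset.univ.filter (fun π : Equiv.Perm (Fin n) => f π ∈ A ∩ B)).filter
            (fun π => f π = x)).card = c := by
      intro x hx
      have : ((Finset.univ.filter (fun π : Equiv.Perm (Fin n) => f π ∈ A ∩ B)).filter
          (fun π => f π = x)) = Finset.univ.filter (fun π => f π = x) := by
        rw [Finset.filter_filter]
        apply Finset.filter_congr
        intro π _
        constructor
        · exact fun h => h.2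
        · exact fun h => ⟨h ▸ hx, h⟩
      rw [this]
      exact hfiber x (Finset.mem_of_subset Finset.inter_subset_union hx) x0 hx0
    rw [Finset.sum_congr rfl h3, Finset.sum_const, smul_eq_mul]
  have hcne : (c : ℚ) ≠ 0 := by
    have : Nat.factorial n ≠ 0 := Nat.factorial_ne_zero n
    rw [htot] at this
    exact_mod_cast fun h => this (by exact_mod_cast mul_eq_zero_of_right _ (by exact_mod_cast h))
  have hUne : ((U.card : ℚ)) ≠ 0 := by
    exact_mod_cast Finset.card_ne_zero_of_mem hx0
  rw [hnum, htot]
  push_cast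
  field_simp
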